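/- arXiv:1903.04790 — 6 statements merged into one kernel-verified Lean document; each statement's English description precedes it below -/
import Mathlib

section
/- The map π : ℝ^d → ℝ^m, π(x) = (p₁(x), …, p_m(x)), is a proper map: the preimage under π of every compact subset of ℝ^m is compact. -/
open MvPolynomial Matrix

/-- The matrix associated to an element of a subgroup of the orthogonal group `O(d, ℝ)`. -/
def matOf {d : ℕ} (G : Subgroup (Matrix.orthogonalGroup (Fin d) ℝ)) (g : G) :
    Matrix (Fin d) (Fin d) ℝ :=
  ((g : Matrix.orthogonalGroup (Fin d) ℝ) : Matrix (Fin d) (Fin d) ℝ)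

/-- The geometric quotient map `π = (p₁, …, p_m) : ℝ^d → ℝ^m` associated to a generating
family of `G`-invariant polynomials is a proper map: the preimage of every compact set
is compact. -/
theorem stmt0 {d m : ℕ}
    (G : Subgroup (Matrix.orthogonalGroup (Fin d) ℝ)) [Finite G]
    (p : Fin m → MvPolynomial (Fin d) ℝ)
    (hinv : ∀ (i : Fin m) (g : G) (x : Fin d → ℝ),
      eval ((matOf G g).mulVec x) (p i) = eval x (p i))
    (hgen : ∀ f : MvPolynomial (Fin d) ℝ,
      (∀ (g : G) (x : Fin d → ℝ), eval ((matOf G g).mulVec x) f = eval x f) →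
        f ∈ Algebra.adjoin ℝ (Set.range p))
    (π : (Fin d → ℝ) → (Fin m → ℝ))
    (hπ : ∀ (x : Fin d → ℝ) (i : Fin m), π x i = eval x (p i)) :
    ∀ K : Set (Fin m → ℝ), IsCompact K → IsCompact (π ⁻¹' K) := by
  intro K hK
  -- the squared norm polynomial
  set f : MvPolynomial (Fin d) ℝ := ∑ i, X i ^ 2 with hf
  have hfeval : ∀ x : Fin d → ℝ, eval x f = ∑ i, x i ^ 2 := by
    intro x; simp [hf]
  -- f is G-invariant since G consists of orthogonal matrices
  have hfinv : ∀ (g : G) (x : Fin d → ℝ),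
      eval ((matOf G g).mulVec x) f = eval x f := by
    intro g x
    have hM : (matOf G g)ᵀ * matOf G g = 1 := by
      have h1 : star (matOf G g) * matOf G g = 1 :=
        ((g : Matrix.orthogonalGroup (Fin d) ℝ).2).1
      simpa [Matrix.star_eq_conjTranspose, Matrix.conjTranspose_eq_transpose_of_trivial] using h1
    rw [hfeval, hfeval]
    have h1 : ((matOf G g).mulVec x) ⬝ᵥ ((matOf G g).mulVec x) = x ⬝ᵥ x := by
      rw [Matrix.dotProduct_mulVec, ← Matrix.vecMul_transpose, Matrix.vecMul_vecMul, hM,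
        Matrix.vecMul_one]
    simpa [dotProduct, sq] using h1
  obtain ⟨Q, hQ⟩ : ∃ Q : MvPolynomial (Fin m) ℝ, aeval p Q = f := by
    have := hgen f hfinv
    rw [Algebra.adjoin_range_eq_range_aeval] at this
    exact this
  -- key identity: ∑ xᵢ² = eval (π x) Q
  have key : ∀ x : Fin d → ℝ, ∑ i, x i ^ 2 = eval (π x) Q := by
    intro x
    have h1 : eval x (aeval p Q) = eval (fun i => eval x (p i)) Q := by
      rw [aeval_def, eval_eval₂]
      have h : (eval x).comp (algebraMap ℝ (MvPolynomial (Fin d) ℝ)) = RingHom.id ℝ := by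
        ext r; simp
      rw [h, eval₂_id]
    have h2 : (fun i => eval x (p i)) = π x := by
      funext i; rw [hπ]
    rw [← hfeval x, ← hQ, h1, h2]
  -- π is continuous
  have hπcont : Continuous π := by
    have : π = fun x i => eval x (p i) := by funext x i; exact hπ x i
    rw [this]
    exact continuous_pi fun i => (p i).continuous_eval
  -- bound on the preimage
  obtain ⟨C, hC⟩ : ∃ C : ℝ, ∀ y ∈ K, eval y Q ≤ C := by
    rcases (hK.image Q.continuous_eval).isBounded.subset_closedBall 0 with ⟨r, hr⟩
    exact ⟨r, fun y hy => by
      have := hr ⟨y, hy, rfl⟩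
      simp only [Metric.mem_closedBall, Real.dist_eq, sub_zero] at this
      exact (abs_le.mp this).2⟩
  have hsub : π ⁻¹' K ⊆ Metric.closedBall 0 (Real.sqrt C) := by
    intro x hx
    have hb : ∑ i, x i ^ 2 ≤ C := (key x).le.trans (le_of_eq rfl) |>.trans (hC _ hx)
    rw [Metric.mem_closedBall, dist_zero_right]
    rw [pi_norm_le_iff_of_nonneg (Real.sqrt_nonneg C)]
    intro i
    have h1 : x i ^ 2 ≤ C := by
      have : x i ^ 2 ≤ ∑ j, x j ^ 2 :=
        Finset.single_le_sum (f := fun j => x j ^ 2) (fun j _ => sq_nonneg _)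
          (Finset.mem_univ i)
      linarith
    calc ‖x i‖ = Real.sqrt ((x i) ^ 2) := by
          rw [Real.sqrt_sq_eq_abs]; rfl
      _ ≤ Real.sqrt C := Real.sqrt_le_sqrt h1
  exact (isCompact_closedBall 0 (Real.sqrt C)).of_isClosed_subset
    (hK.isClosed.preimage hπcont) hsub
end

section
/- For all x, y ∈ ℝ^d, one has π(x) = π(y) if and only if there exists g ∈ G with y = g·x; that is, the fibers of π are exactly the G-orbits. -/
open MvPolynomial Matrix

lemma ortho_sq' {d : ℕ} (A : Matrix.orthogonalGroup (Fin d) ℝ) (v : Fin d → ℝ) :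
    ∑ i, ((A.1).mulVec v i) ^ 2 = ∑ i, v i ^ 2 := by
  have h : star A.1 * A.1 = 1 := by
    have := A.prop
    rw [Matrix.mem_unitaryGroup_iff'] at this
    exact this
  have hT : (A.1)ᵀ * A.1 = 1 := by
    simpa [Matrix.star_eq_conjTranspose, Matrix.conjTranspose_eq_transpose_of_trivial] using h
  calc ∑ i, (A.1.mulVec v i) ^ 2
      = dotProduct (A.1.mulVec v) (A.1.mulVec v) := by
        simp [dotProduct, sq]
    _ = ∑ i, v i ^ 2 := by
        rw [Matrix.dotProduct_mulVec, ← Matrix.mulVec_transpose, Matrix.mulVec_mulVec, hT]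
        simp [dotProduct, sq]


/-- The fibers of the geometric quotient map `π = (p₁, …, p_m) : ℝ^d → ℝ^m` are exactly the
`G`-orbits: `π x = π y` if and only if `y = g · x` for some `g ∈ G`. -/
theorem stmt1 {d m : ℕ}
    (G : Subgroup (Matrix.orthogonalGroup (Fin d) ℝ)) [Finite G]
    (p : Fin m → MvPolynomial (Fin d) ℝ)
    (hinv : ∀ (i : Fin m) (g : G) (x : Fin d → ℝ),
      eval ((matOf G g).mulVec x) (p i) = eval x (p i))
    (hgen : ∀ f : MvPolynomial (Fin d) ℝ,
      (∀ (g : G) (x : Fin d → ℝ), eval ((matOf G g).mulVec x) f = eval x f) →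
        f ∈ Algebra.adjoin ℝ (Set.range p))
    (π : (Fin d → ℝ) → (Fin m → ℝ))
    (hπ : ∀ (x : Fin d → ℝ) (i : Fin m), π x i = eval x (p i)) :
    ∀ x y : Fin d → ℝ, π x = π y ↔ ∃ g : G, y = (matOf G g).mulVec x := by
  have := Fintype.ofFinite G
  intro x y
  constructor
  · intro hxy
    by_contra hc
    push_neg at hc
    -- separating invariant polynomial
    set q : MvPolynomial (Fin d) ℝ :=
      ∏ g : G, ∑ i, (X i - C ((matOf G g).mulVec x i)) ^ 2 with hq
    have heval : ∀ z : Fin d → ℝ,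
        eval z q = ∏ g : G, ∑ i, (z i - (matOf G g).mulVec x i) ^ 2 := by
      intro z
      simp [hq]
    -- invariance of q
    have hqinv : ∀ (g : G) (z : Fin d → ℝ),
        eval ((matOf G g).mulVec z) q = eval z q := by
      intro h z
      rw [heval, heval]
      rw [← Equiv.prod_comp (Equiv.mulLeft h⁻¹)
        (fun g => ∑ i, (z i - (matOf G g).mulVec x i) ^ 2)]
      refine Finset.prod_congr rfl fun g _ => ?_
      -- goal: ∑ i, ((h z)_i - (g x)_i)^2 = ∑ i, (z_i - ((h⁻¹ g) x)_i)^2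
      have hmul : (matOf G g).mulVec x
          = (matOf G h).mulVec ((matOf G (h⁻¹ * g)).mulVec x) := by
        rw [Matrix.mulVec_mulVec]
        have h1 : (h : Matrix.orthogonalGroup (Fin d) ℝ).1 *
            star (h : Matrix.orthogonalGroup (Fin d) ℝ).1 = 1 :=
          Unitary.mul_star_self_of_mem (h : Matrix.orthogonalGroup (Fin d) ℝ).prop
        simp [matOf, ← mul_assoc, h1]
      rw [hmul]
      have : ∀ i, (matOf G h).mulVec z i - (matOf G h).mulVec ((matOf G (h⁻¹ * g)).mulVec x) i
          = (matOf G h).mulVec (z - (matOf G (h⁻¹ * g)).mulVec x) i := by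
        intro i
        simp [Matrix.mulVec, dotProduct, mul_sub, Finset.sum_sub_distrib]
      simp only [Equiv.coe_mulLeft, this]
      have := ortho_sq' (h : Matrix.orthogonalGroup (Fin d) ℝ)
        (z - (matOf G (h⁻¹ * g)).mulVec x)
      simpa [matOf, Matrix.sub_apply] using this
    have hqadj := hgen q hqinv
    -- eval agrees on adjoin
    have hagree : eval x q = eval y q := by
      have key : ∀ f ∈ Algebra.adjoin ℝ (Set.range p), eval x f = eval y f := by
        intro f hf
        induction hf using Algebra.adjoin_induction with
        | mem f hf =>
            obtain ⟨i, rfl⟩ := hf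
            rw [← hπ, ← hπ, hxy]
        | algebraMap r => simp
        | add f₁ f₂ _ _ h1 h2 => simp [h1, h2]
        | mul f₁ f₂ _ _ h1 h2 => simp [h1, h2]
      exact key q hqadj
    -- eval x q = 0
    have hx0 : eval x q = 0 := by
      rw [heval]
      refine Finset.prod_eq_zero (Finset.mem_univ (1 : G)) ?_
      simp [matOf]
    -- eval y q ≠ 0
    have hy0 : eval y q ≠ 0 := by
      rw [heval]
      refine Finset.prod_ne_zero_iff.mpr fun g _ => ?_
      intro h0
      apply hc g
      funext i
      have hnn : ∀ i ∈ Finset.univ, (0:ℝ) ≤ (y i - (matOf G g).mulVec x i) ^ 2 :=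
        fun i _ => sq_nonneg _
      have := (Finset.sum_eq_zero_iff_of_nonneg hnn).mp h0 i (Finset.mem_univ i)
      have := pow_eq_zero_iff (n := 2) (by norm_num) |>.mp this
      linarith [this]
    rw [hagree] at hx0
    exact hy0 hx0
  · rintro ⟨g, rfl⟩
    funext i
    rw [hπ, hπ, hinv]
end

section
/- Let X ⊆ ℝ^d be a G-stable subset (g·x ∈ X for every g ∈ G and x ∈ X). Then the restriction π|X : X → π(X), where X and π(X) carry the subspace topologies, is proper (the preimage of every compact subset of π(X) is compact), is a closed map, and is an open map. -/
open MvPolynomial Matrix Filter Topology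

lemma eval_aeval_eq {σ τ : Type} (φ : σ → MvPolynomial τ ℝ) (x : τ → ℝ)
    (q : MvPolynomial σ ℝ) :
    eval x (aeval φ q) = eval (fun i => eval x (φ i)) q := by
  induction q using MvPolynomial.induction_on with
  | C a => simp
  | add p q hp hq => simp only [_root_.map_add, hp, hq]
  | mul_X p i hp => simp only [_root_.map_mul, hp, aeval_X, eval_X]

noncomputable def twist {d : ℕ} (A : Matrix (Fin d) (Fin d) ℝ)
    (r : MvPolynomial (Fin d) ℝ) : MvPolynomial (Fin d) ℝ :=
  aeval (fun i => ∑ j, C (A i j) * X j) r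

lemma eval_twist {d : ℕ} (A : Matrix (Fin d) (Fin d) ℝ) (r : MvPolynomial (Fin d) ℝ)
    (x : Fin d → ℝ) : eval x (twist A r) = eval (A.mulVec x) r := by
  have hfun : (fun i => eval x (∑ j, C (A i j) * X j)) = A.mulVec x := by
    funext i; simp [Matrix.mulVec, dotProduct]
  rw [twist, eval_aeval_eq, hfun]

lemma matOf_mul {d : ℕ} (G : Subgroup (Matrix.orthogonalGroup (Fin d) ℝ)) (g h : G) :
    matOf G (g * h) = matOf G g * matOf G h := rfl

lemma matOf_one {d : ℕ} (G : Subgroup (Matrix.orthogonalGroup (Fin d) ℝ)) :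
    matOf G (1 : G) = 1 := rfl

lemma matOf_sq_sum {d : ℕ} (G : Subgroup (Matrix.orthogonalGroup (Fin d) ℝ)) (g : G)
    (x : Fin d → ℝ) :
    ∑ i, ((matOf G g).mulVec x i) ^ 2 = ∑ i, (x i) ^ 2 := by
  set A := matOf G g with hA
  have hstar : star A * A = 1 := (g : Matrix.orthogonalGroup (Fin d) ℝ).prop.1
  have htrans : Aᵀ * A = 1 := by
    rwa [Matrix.star_eq_conjTranspose, Matrix.conjTranspose_eq_transpose_of_trivial] at hstar
  have h1 : ∑ i, ((A.mulVec x) i) ^ 2 = (A.mulVec x) ⬝ᵥ (A.mulVec x) := by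
    simp [dotProduct, sq]
  have h2 : (A.mulVec x) ⬝ᵥ (A.mulVec x) = x ⬝ᵥ x := by
    rw [Matrix.dotProduct_mulVec, ← Matrix.vecMul_transpose, Matrix.vecMul_vecMul, htrans,
      Matrix.vecMul_one]
  rw [h1, h2]
  simp [dotProduct, sq]

lemma pi_inv {d m : ℕ} {G : Subgroup (Matrix.orthogonalGroup (Fin d) ℝ)}
    {p : Fin m → MvPolynomial (Fin d) ℝ}
    (hinv : ∀ (i : Fin m) (g : G) (x : Fin d → ℝ),
      eval ((matOf G g).mulVec x) (p i) = eval x (p i))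
    {π : (Fin d → ℝ) → (Fin m → ℝ)}
    (hπ : ∀ (x : Fin d → ℝ) (i : Fin m), π x i = eval x (p i))
    (g : G) (x : Fin d → ℝ) : π ((matOf G g).mulVec x) = π x := by
  funext i
  rw [hπ, hπ, hinv]

lemma sep_lemma {d m : ℕ} (G : Subgroup (Matrix.orthogonalGroup (Fin d) ℝ)) [Finite G]
    (p : Fin m → MvPolynomial (Fin d) ℝ)
    (hgen : ∀ f : MvPolynomial (Fin d) ℝ,
      (∀ (g : G) (x : Fin d → ℝ), eval ((matOf G g).mulVec x) f = eval x f) →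
        f ∈ Algebra.adjoin ℝ (Set.range p))
    (π : (Fin d → ℝ) → (Fin m → ℝ))
    (hπ : ∀ (x : Fin d → ℝ) (i : Fin m), π x i = eval x (p i))
    (x z : Fin d → ℝ) (hxz : π x = π z) :
    ∃ g : G, z = (matOf G g).mulVec x := by
  by_contra hc
  push_neg at hc
  have : Fintype G := Fintype.ofFinite G
  set orb : Finset (Fin d → ℝ) := Finset.image (fun g : G => (matOf G g).mulVec x) Finset.univ
    with horb
  set r : MvPolynomial (Fin d) ℝ := ∏ a ∈ orb, ∑ i, (X i - C (a i)) ^ 2 with hr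
  have hr_eval : ∀ w : Fin d → ℝ, eval w r = ∏ a ∈ orb, ∑ i, (w i - a i) ^ 2 := by
    intro w; simp [hr]
  set f : MvPolynomial (Fin d) ℝ := ∑ g : G, twist (matOf G g) r with hf
  have hf_eval : ∀ w : Fin d → ℝ, eval w f = ∑ g : G, eval ((matOf G g).mulVec w) r := by
    intro w; simp [hf, eval_twist]
  have hf_inv : ∀ (h : G) (w : Fin d → ℝ), eval ((matOf G h).mulVec w) f = eval w f := by
    intro h w
    rw [hf_eval, hf_eval]
    refine Fintype.sum_equiv (Equiv.mulRight h) _ _ (fun g => ?_)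
    rw [Matrix.mulVec_mulVec, ← matOf_mul]
    rfl
  have hfx : eval x f = 0 := by
    rw [hf_eval]
    refine Finset.sum_eq_zero (fun g _ => ?_)
    rw [hr_eval]
    refine Finset.prod_eq_zero (Finset.mem_image_of_mem _ (Finset.mem_univ g)) ?_
    simp
  have hfz : 0 < eval z f := by
    rw [hf_eval]
    have hterm : ∀ g : G, 0 ≤ eval ((matOf G g).mulVec z) r := by
      intro g
      rw [hr_eval]
      exact Finset.prod_nonneg fun a _ =>
        Finset.sum_nonneg fun i _ => sq_nonneg _
    have hone : 0 < eval ((matOf G (1 : G)).mulVec z) r := by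
      rw [matOf_one, Matrix.one_mulVec, hr_eval]
      refine Finset.prod_pos fun a ha => ?_
      obtain ⟨g, -, rfl⟩ := Finset.mem_image.mp ha
      have hne : z ≠ (matOf G g).mulVec x := hc g
      obtain ⟨i, hi⟩ := Function.ne_iff.mp hne
      refine Finset.sum_pos' (fun i _ => sq_nonneg _) ⟨i, Finset.mem_univ i, ?_⟩
      have := sub_ne_zero_of_ne hi
      positivity
    exact Finset.sum_pos' (fun g _ => hterm g) ⟨1, Finset.mem_univ 1, hone⟩
  have hmem := hgen f hf_inv
  rw [Algebra.adjoin_range_eq_range_aeval] at hmem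
  obtain ⟨q, hq⟩ := hmem
  have hev : eval x f = eval z f := by
    rw [← hq]
    show eval x (aeval p q) = eval z (aeval p q)
    rw [eval_aeval_eq, eval_aeval_eq]
    have : (fun i => eval x (p i)) = fun i => eval z (p i) := by
      funext i; rw [← hπ, ← hπ, hxz]
    rw [this]
  rw [hfx] at hev
  linarith

lemma norm_poly {d m : ℕ} (G : Subgroup (Matrix.orthogonalGroup (Fin d) ℝ)) [Finite G]
    (p : Fin m → MvPolynomial (Fin d) ℝ)
    (hgen : ∀ f : MvPolynomial (Fin d) ℝ,
      (∀ (g : G) (x : Fin d → ℝ), eval ((matOf G g).mulVec x) f = eval x f) →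
        f ∈ Algebra.adjoin ℝ (Set.range p))
    (π : (Fin d → ℝ) → (Fin m → ℝ))
    (hπ : ∀ (x : Fin d → ℝ) (i : Fin m), π x i = eval x (p i)) :
    ∃ q : MvPolynomial (Fin m) ℝ, ∀ x : Fin d → ℝ, ∑ i, (x i) ^ 2 = eval (π x) q := by
  set N : MvPolynomial (Fin d) ℝ := ∑ i, X i ^ 2 with hN
  have hNev : ∀ x : Fin d → ℝ, eval x N = ∑ i, (x i) ^ 2 := by intro x; simp [hN]
  have hNinv : ∀ (g : G) (x : Fin d → ℝ), eval ((matOf G g).mulVec x) N = eval x N := by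
    intro g x
    rw [hNev, hNev]
    exact matOf_sq_sum G g x
  have hmem := hgen N hNinv
  rw [Algebra.adjoin_range_eq_range_aeval] at hmem
  obtain ⟨q, hq⟩ := hmem
  refine ⟨q, fun x => ?_⟩
  have hpx : (fun i => eval x (p i)) = π x := by funext i; rw [hπ]
  have hq' : aeval p q = N := hq
  rw [← hNev x, ← hq', eval_aeval_eq, hpx]

lemma norm_le_of_sq_sum {d : ℕ} (x : Fin d → ℝ) (R : ℝ) (h : ∑ i, (x i) ^ 2 ≤ R) :
    ‖x‖ ≤ Real.sqrt R := by
  refine (pi_norm_le_iff_of_nonneg (Real.sqrt_nonneg R)).mpr fun i => ?_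
  rw [Real.norm_eq_abs]
  exact Real.abs_le_sqrt
    (le_trans (Finset.single_le_sum (fun j _ => sq_nonneg (x j)) (Finset.mem_univ i)) h)

lemma continuous_mulVec {d : ℕ} (A : Matrix (Fin d) (Fin d) ℝ) :
    Continuous fun x : Fin d → ℝ => A.mulVec x := by
  have := (Matrix.mulVecLin A).continuous_of_finiteDimensional
  exact this

open Filter Topology in
lemma closed_core {d m : ℕ} (π : (Fin d → ℝ) → (Fin m → ℝ)) (contπ : Continuous π)
    (q : MvPolynomial (Fin m) ℝ) (hq : ∀ x : Fin d → ℝ, ∑ i, (x i) ^ 2 = eval (π x) q)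
    (X : Set (Fin d → ℝ))
    (hsep : ∀ x z : Fin d → ℝ, π x = π z → x ∈ X → z ∈ X) :
    ∀ F : Set (Fin d → ℝ), IsClosed F →
      closure (π '' (F ∩ X)) ∩ π '' X ⊆ π '' (F ∩ X) := by
  rintro F hF y ⟨hyc, x, hxX, hyx⟩
  obtain ⟨u, hu, hulim⟩ := mem_closure_iff_seq_limit.mp hyc
  choose c hc hcπ using hu
  have htq : Tendsto (fun n => eval (u n) q) atTop (𝓝 (eval y q)) :=
    ((MvPolynomial.continuous_eval q).tendsto y).comp hulim
  obtain ⟨R, hR⟩ := htq.bddAbove_range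
  have hcb : ∀ n, c n ∈ Metric.closedBall (0 : Fin d → ℝ) (Real.sqrt R) := by
    intro n
    rw [mem_closedBall_zero_iff]
    exact norm_le_of_sq_sum _ _ (by rw [hq (c n), hcπ n]; exact hR ⟨n, rfl⟩)
  obtain ⟨z, -, φ, hφ, hzlim⟩ :=
    (isCompact_closedBall (0 : Fin d → ℝ) (Real.sqrt R)).tendsto_subseq hcb
  have hzF : z ∈ F := hF.mem_of_tendsto hzlim (.of_forall fun n => (hc (φ n)).1)
  have h1 : Tendsto (fun n => π (c (φ n))) atTop (𝓝 (π z)) := (contπ.tendsto z).comp hzlim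
  have h2 : Tendsto (fun n => π (c (φ n))) atTop (𝓝 y) := by
    have := hulim.comp hφ.tendsto_atTop
    simpa [Function.comp_def, fun n => hcπ (φ n)] using this
  have hπz : π z = y := tendsto_nhds_unique h1 h2
  have hzX : z ∈ X := hsep x z (by rw [hπz, hyx]) hxX
  exact ⟨z, ⟨hzF, hzX⟩, hπz⟩


/-- If `X ⊆ ℝ^d` is `G`-stable, the restriction `π|X : X → π(X)` of the geometric quotient
map (with subspace topologies) is proper, closed and open. -/
theorem stmt2 {d m : ℕ}
    (G : Subgroup (Matrix.orthogonalGroup (Fin d) ℝ)) [Finite G]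
    (p : Fin m → MvPolynomial (Fin d) ℝ)
    (hinv : ∀ (i : Fin m) (g : G) (x : Fin d → ℝ),
      eval ((matOf G g).mulVec x) (p i) = eval x (p i))
    (hgen : ∀ f : MvPolynomial (Fin d) ℝ,
      (∀ (g : G) (x : Fin d → ℝ), eval ((matOf G g).mulVec x) f = eval x f) →
        f ∈ Algebra.adjoin ℝ (Set.range p))
    (π : (Fin d → ℝ) → (Fin m → ℝ))
    (hπ : ∀ (x : Fin d → ℝ) (i : Fin m), π x i = eval x (p i))
    (X : Set (Fin d → ℝ))
    (hX : ∀ (g : G), ∀ x ∈ X, (matOf G g).mulVec x ∈ X) :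
    (∀ K : Set ↥(π '' X), IsCompact K →
      IsCompact ((Set.mapsTo_image π X).restrict π X (π '' X) ⁻¹' K)) ∧
    IsClosedMap ((Set.mapsTo_image π X).restrict π X (π '' X)) ∧
    IsOpenMap ((Set.mapsTo_image π X).restrict π X (π '' X)) := by
  have contπ : Continuous π := by
    refine continuous_pi fun i => ?_
    have : (fun x => π x i) = fun x => eval x (p i) := funext fun x => hπ x i
    rw [this]
    exact MvPolynomial.continuous_eval (p i)
  have sep := sep_lemma G p hgen π hπ
  obtain ⟨q, hq⟩ := norm_poly G p hgen π hπ
  have hπg := pi_inv hinv hπ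
  have hsep : ∀ x z : Fin d → ℝ, π x = π z → x ∈ X → z ∈ X := by
    intro x z hxz hxX
    obtain ⟨g, hg⟩ := sep x z hxz
    rw [hg]
    exact hX g x hxX
  set ρ := (Set.mapsTo_image π X).restrict π X (π '' X) with hρdef
  have hρval : ∀ x : X, (ρ x : Fin m → ℝ) = π ↑x := fun x => rfl
  -- Closed map
  have hclosed : IsClosedMap ρ := by
    intro C hC
    obtain ⟨F, hF, hFC⟩ := isClosed_induced_iff.mp hC
    have key := closed_core π contπ q hq X hsep F hF
    refine isClosed_induced_iff.mpr ⟨closure (π '' (F ∩ X)), isClosed_closure, ?_⟩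
    ext yb
    simp only [Set.mem_preimage]
    constructor
    · intro h
      obtain ⟨v, ⟨hvF, hvX⟩, hπv⟩ := key ⟨h, yb.2⟩
      refine ⟨⟨v, hvX⟩, ?_, Subtype.ext (by rw [hρval]; exact hπv)⟩
      rw [← hFC]
      exact hvF
    · rintro ⟨xb, hxbC, rfl⟩
      refine subset_closure ⟨↑xb, ⟨?_, xb.2⟩, (hρval xb).symm⟩
      rw [← hFC] at hxbC
      exact hxbC
  refine ⟨?_, hclosed, ?_⟩
  -- Properness
  · intro K hK
    rw [Subtype.isCompact_iff]
    have hK' : IsCompact (Subtype.val '' K) := hK.image continuous_subtype_val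
    have himg : Subtype.val '' (ρ ⁻¹' K) = {x | x ∈ X ∧ π x ∈ Subtype.val '' K} := by
      ext v
      constructor
      · rintro ⟨xb, hxb, rfl⟩
        exact ⟨xb.2, ⟨ρ xb, hxb, (hρval xb).symm⟩⟩
      · rintro ⟨hvX, k, hk, hkv⟩
        refine ⟨⟨v, hvX⟩, ?_, rfl⟩
        have : ρ ⟨v, hvX⟩ = k := Subtype.ext (by rw [hρval]; exact hkv.symm)
        show ρ ⟨v, hvX⟩ ∈ K
        rw [this]
        exact hk
    rw [himg, Metric.isCompact_iff_isClosed_bounded]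
    constructor
    · refine IsSeqClosed.isClosed ?_
      intro u v hu hlim
      have h1 : Tendsto (fun n => π (u n)) atTop (𝓝 (π v)) := (contπ.tendsto v).comp hlim
      have hk' : π v ∈ Subtype.val '' K :=
        hK'.isClosed.mem_of_tendsto h1 (.of_forall fun n => (hu n).2)
      obtain ⟨k, -, he⟩ := id hk'
      have hvπX : π v ∈ π '' X := he ▸ k.2
      obtain ⟨x0, hx0X, hx0⟩ := hvπX
      exact ⟨hsep x0 v hx0 hx0X, hk'⟩
    · obtain ⟨R, hR⟩ := (hK'.image (MvPolynomial.continuous_eval q)).bddAbove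
      refine isBounded_iff_forall_norm_le.mpr ⟨Real.sqrt R, fun v hv => ?_⟩
      exact norm_le_of_sq_sum _ _ (by rw [hq v]; exact hR ⟨π v, hv.2, rfl⟩)
  -- Open map
  · intro U hU
    obtain ⟨O, hO, hOU⟩ := isOpen_induced_iff.mp hU
    set W : Set (Fin d → ℝ) := ⋃ g : G, (fun v => (matOf G g).mulVec v) ⁻¹' O with hWdef
    have hWopen : IsOpen W := isOpen_iUnion fun g => hO.preimage (continuous_mulVec _)
    set Cs : Set X := Subtype.val ⁻¹' Wᶜ with hCsdef
    have hCs : IsClosed Cs := (isClosed_compl_iff.mpr hWopen).preimage continuous_subtype_val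
    have himage : ρ '' U = (ρ '' Cs)ᶜ := by
      ext yb
      constructor
      · rintro ⟨xb, hxbU, rfl⟩ ⟨cb, hcb, hcy⟩
        have hπeq : π ↑xb = π ↑cb := by
          rw [← hρval, ← hρval, hcy]
        obtain ⟨g, hg⟩ := sep ↑xb ↑cb hπeq
        apply hcb
        refine Set.mem_iUnion.mpr ⟨g⁻¹, ?_⟩
        show (matOf G g⁻¹).mulVec ↑cb ∈ O
        have hback : (matOf G g⁻¹).mulVec ((matOf G g).mulVec ↑xb) = ↑xb := by
          rw [Matrix.mulVec_mulVec, ← matOf_mul, inv_mul_cancel, matOf_one, Matrix.one_mulVec]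
        rw [hg, hback]
        rw [← hOU] at hxbU
        exact hxbU
      · intro hyb
        obtain ⟨x, hxX, hπx⟩ := yb.2
        have hxb : (⟨x, hxX⟩ : X) ∉ Cs := by
          intro hmem
          exact hyb ⟨⟨x, hxX⟩, hmem, Subtype.ext (by rw [hρval]; exact hπx)⟩
        have hxW : x ∈ W := not_not.mp hxb
        obtain ⟨g, hg⟩ := Set.mem_iUnion.mp hxW
        refine ⟨⟨(matOf G g).mulVec x, hX g x hxX⟩, ?_, ?_⟩
        · rw [← hOU]
          exact hg
        · apply Subtype.ext
          rw [hρval]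
          show π ((matOf G g).mulVec x) = ↑yb
          rw [hπg g x, hπx]
    rw [himage]
    exact (hclosed Cs hCs).isOpen_compl
end

section
/- Let V ⊆ ℝ^d be a real algebraic set (the zero locus of a set of polynomials), let G be a finite group with identity e, and for each g ∈ G let α_g : ℝ^d → ℝ^d be a polynomial map such that α_g(V) ⊆ V, α_e = id on V, and α_g ∘ α_h = α_{gh} on V (so G acts on V). Define φ : V → (G → ℝ^d) by φ(x)(g) = α_{g⁻¹}(x), and let G act on G → ℝ^d by the linear permutation action (h • y)(g) = y(h⁻¹g). Then: (i) φ is injective, with inverse on its image given by the linear map y ↦ y(e); (ii) φ is equivariant: φ(α_h(x)) = h • φ(x) for all h ∈ G, x ∈ V; (iii) the image φ(V) equals the set {y : G → ℝ^d | y(e) ∈ V and y(g) = α_{g⁻¹}(y(e)) for all g ∈ G}, which is a real algebraic subset of (ℝ^d)^G; hence V is equivariantly polynomially isomorphic to a real algebraic set globally stabilized by a linear action of G given by permutation of the factors. -/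
open MvPolynomial

/-- Let `V ⊆ ℝ^d` be a real algebraic set on which a finite group `G` acts by polynomial
maps `α_g`. Define `φ : V → (ℝ^d)^G` by `φ(x)(g) = α_{g⁻¹}(x)` and let `G` act on
`(ℝ^d)^G = (G → ℝ^d)` by permutation `(h • y)(g) = y(h⁻¹ g)`. Then (i) `φ` is injective on
`V` with inverse `y ↦ y(e)` on its image; (ii) `φ` is equivariant; (iii) the image `φ(V)`
is the set `{y | y(e) ∈ V ∧ ∀ g, y(g) = α_{g⁻¹}(y(e))}`, which is a real algebraic subset
of `(ℝ^d)^G`. -/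
theorem stmt6 {d : ℕ} {G : Type*} [Group G] [Finite G]
    (S : Set (MvPolynomial (Fin d) ℝ)) (V : Set (Fin d → ℝ))
    (hV : V = {x | ∀ f ∈ S, eval x f = 0})
    (a : G → Fin d → MvPolynomial (Fin d) ℝ)
    (α : G → (Fin d → ℝ) → (Fin d → ℝ))
    (hα : ∀ (g : G) (x : Fin d → ℝ) (i : Fin d), α g x i = eval x (a g i))
    (hstab : ∀ (g : G), ∀ x ∈ V, α g x ∈ V)
    (hid : ∀ x ∈ V, α 1 x = x)
    (hcomp : ∀ (g h : G), ∀ x ∈ V, α g (α h x) = α (g * h) x)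
    (φ : (Fin d → ℝ) → (G → Fin d → ℝ))
    (hφ : ∀ (x : Fin d → ℝ) (g : G), φ x g = α g⁻¹ x) :
    Set.InjOn φ V ∧
    (∀ x ∈ V, φ x 1 = x) ∧
    (∀ (h : G), ∀ x ∈ V, ∀ g : G, φ (α h x) g = φ x (h⁻¹ * g)) ∧
    φ '' V = {y : G → Fin d → ℝ | y 1 ∈ V ∧ ∀ g : G, y g = α g⁻¹ (y 1)} ∧
    (∃ T : Set (MvPolynomial (G × Fin d) ℝ),
      {y : G → Fin d → ℝ | y 1 ∈ V ∧ ∀ g : G, y g = α g⁻¹ (y 1)} =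
        {y : G → Fin d → ℝ | ∀ f ∈ T, eval (fun pr : G × Fin d => y pr.1 pr.2) f = 0}) := by
  have hretr : ∀ x ∈ V, φ x 1 = x := by
    intro x hx
    rw [hφ, inv_one]
    exact hid x hx
  refine ⟨?_, hretr, ?_, ?_, ?_⟩
  · intro x hx y hy hxy
    rw [← hretr x hx, ← hretr y hy, hxy]
  · intro h x hx g
    rw [hφ, hφ, hcomp g⁻¹ h x hx, mul_inv_rev, inv_inv]
  · ext y
    constructor
    · rintro ⟨x, hx, rfl⟩
      have h1 : φ x 1 = x := hretr x hx
      exact ⟨h1.symm ▸ hx, fun g => by rw [h1]; exact hφ x g⟩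
    · rintro ⟨h1, h2⟩
      refine ⟨y 1, h1, ?_⟩
      funext g
      rw [hφ, ← h2 g]
  · refine ⟨(rename (fun i => ((1 : G), i)) '' S) ∪
      {f | ∃ (g : G) (i : Fin d),
        f = X (g, i) - rename (fun i => ((1 : G), i)) (a g⁻¹ i)}, ?_⟩
    ext y
    have key : ∀ f : MvPolynomial (Fin d) ℝ,
        eval (fun pr : G × Fin d => y pr.1 pr.2) (rename (fun i => ((1 : G), i)) f)
          = eval (y 1) f := by
      intro f
      rw [eval_rename]
      rfl
    simp only [Set.mem_setOf_eq]
    constructor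
    · rintro ⟨h1, h2⟩ f hf
      rcases hf with ⟨f', hf', rfl⟩ | ⟨g, i, rfl⟩
      · rw [key]
        exact (hV ▸ h1) f' hf'
      · simp only [map_sub, eval_X, key]
        rw [← hα g⁻¹ (y 1) i, ← h2 g]
        ring
    · intro hall
      constructor
      · rw [hV]
        intro f hf
        rw [← key]
        exact hall _ (Or.inl ⟨f, hf, rfl⟩)
      · intro g
        funext i
        have := hall _ (Or.inr ⟨g, i, rfl⟩)
        simp only [map_sub, eval_X, key] at this
        rw [hα g⁻¹ (y 1) i]
        linarith
end

section
/- Let G be a finite group acting by ring automorphisms on a commutative ring R, and let R^G := {r ∈ R | g·r = r for all g ∈ G} be the fixed subring. Then the Krull dimension of R equals the Krull dimension of R^G. -/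
/-- The subring of `G`-fixed elements of a commutative ring on which a group `G` acts
by ring automorphisms. -/
def fixedSubring (G R : Type*) [Group G] [CommRing R] [MulSemiringAction G R] :
    Subring R where
  carrier := {r | ∀ g : G, g • r = r}
  mul_mem' := fun {a b} ha hb g => by rw [smul_mul', ha g, hb g]
  add_mem' := fun {a b} ha hb g => by rw [smul_add, ha g, hb g]
  one_mem' := fun g => smul_one g
  zero_mem' := fun g => smul_zero g
  neg_mem' := fun {a} ha g => by rw [smul_neg, ha g]

theorem fixedSubring.isIntegral (G R : Type*) [Group G] [Finite G] [CommRing R]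
    [MulSemiringAction G R] : Algebra.IsIntegral (fixedSubring G R) R := by
  cases nonempty_fintype G
  constructor
  intro x
  have hcoeffs : (↑(prodXSubSMul G R x).coeffs : Set R) ⊆ (fixedSubring G R : Set R) := by
    intro c hc
    obtain ⟨n, -, rfl⟩ := Polynomial.mem_coeffs_iff.mp hc
    exact fun g => prodXSubSMul.coeff G R x g n
  refine ⟨(prodXSubSMul G R x).toSubring _ hcoeffs,
    (Polynomial.monic_toSubring _ _ _).2 (prodXSubSMul.monic G R x), ?_⟩
  have halg : algebraMap (fixedSubring G R) R = (fixedSubring G R).subtype := rfl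
  rw [← Polynomial.eval_map, halg, Polynomial.map_toSubring]
  exact prodXSubSMul.eval G R x

theorem fixedSubring.exists_series (G R : Type*) [Group G] [Finite G] [CommRing R]
    [MulSemiringAction G R] (n : ℕ) :
    ∀ p : LTSeries (PrimeSpectrum (fixedSubring G R)), p.length = n →
      ∃ q : LTSeries (PrimeSpectrum R), q.length = n ∧
        q.last.asIdeal.comap (algebraMap (fixedSubring G R) R) = p.last.asIdeal := by
  have := fixedSubring.isIntegral G R
  induction n with
  | zero =>
    intro p hp
    have hker : (⊥ : Ideal R).comap (algebraMap (fixedSubring G R) R) ≤ p.last.asIdeal := by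
      intro y hy
      have : ((y : fixedSubring G R) : R) = 0 := hy
      have : (y : fixedSubring G R) = 0 := Subtype.coe_injective this
      rw [this]; exact (p.last.asIdeal).zero_mem
    obtain ⟨Q, -, hQp, hQc⟩ :=
      Ideal.exists_ideal_over_prime_of_isIntegral p.last.asIdeal ⊥ hker
    exact ⟨RelSeries.singleton _ ⟨Q, hQp⟩, rfl, hQc⟩
  | succ n ih =>
    intro p hp
    obtain ⟨q, hqlen, hqlast⟩ := ih p.eraseLast (by simp [hp])
    have hne : p.length ≠ 0 := by omega
    have hlt : p.eraseLast.last < p.last := p.eraseLast_last_rel_last hne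
    have hle : q.last.asIdeal.comap (algebraMap (fixedSubring G R) R) ≤ p.last.asIdeal := by
      rw [hqlast]; exact le_of_lt hlt
    obtain ⟨Q, hQge, hQp, hQc⟩ :=
      Ideal.exists_ideal_over_prime_of_isIntegral p.last.asIdeal q.last.asIdeal hle
    have hstrict : q.last < (⟨Q, hQp⟩ : PrimeSpectrum R) := by
      refine lt_of_le_of_ne hQge ?_
      intro h
      apply ne_of_lt hlt
      have : q.last.asIdeal = Q := congrArg PrimeSpectrum.asIdeal h
      apply PrimeSpectrum.ext
      rw [← hqlast, this, hQc]
    exact ⟨q.snoc ⟨Q, hQp⟩ hstrict, by simp [hqlen], by simpa using hQc⟩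

/-- If a finite group `G` acts on a commutative ring `R` by ring automorphisms, the Krull
dimension of `R` equals the Krull dimension of the fixed subring `R^G`. -/
theorem stmt12 (G R : Type*) [Group G] [Finite G] [CommRing R] [MulSemiringAction G R] :
    ringKrullDim R = ringKrullDim ↥(fixedSubring G R) := by
  have hint := fixedSubring.isIntegral G R
  apply le_antisymm
  · exact Order.krullDim_le_of_strictMono
      (fun P : PrimeSpectrum R =>
        (⟨P.asIdeal.comap (algebraMap (fixedSubring G R) R), inferInstance⟩ :
          PrimeSpectrum (fixedSubring G R)))
      (fun P Q hPQ => by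
        obtain ⟨x, hxQ, hxP⟩ := SetLike.exists_of_lt (show P.asIdeal < Q.asIdeal from hPQ)
        exact Ideal.comap_lt_comap_of_integral_mem_sdiff (le_of_lt hPQ) ⟨hxQ, hxP⟩
          (Algebra.IsIntegral.isIntegral x))
  · rw [ringKrullDim, ringKrullDim, Order.krullDim]
    apply iSup_le
    intro p
    obtain ⟨q, hq, -⟩ := fixedSubring.exists_series G R p.length p rfl
    rw [Order.krullDim, ← hq]
    exact le_iSup (fun q : LTSeries (PrimeSpectrum R) => (q.length : WithBot (WithTop ℕ))) q
end

section
/- Let A be a commutative ring that is a finitely generated ℝ-algebra, let G be a finite group acting on A by ℝ-algebra automorphisms, and let B := A^G be the fixed subalgebra. Let m be a maximal ideal of A with residue field ℝ (the composition ℝ → A → A/m is an isomorphism) such that g·m ≠ m for every g ∈ G with g ≠ e, and set p := m ∩ B. Then the inclusion B ⊆ A induces an isomorphism of ℝ-vector spaces p/p² → m/m² between the Zariski cotangent spaces. (This is the statement that the geometric quotient map induces an isomorphism m_{π(x)}/m_{π(x)}² → m_x/m_x² at a nonsingular point x with trivial stabilizer.) -/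
/-- The subalgebra of `G`-fixed elements of a commutative `ℝ`-algebra on which a group `G`
acts by `ℝ`-algebra automorphisms. -/
def fixedSubalgebra (G A : Type*) [Group G] [CommRing A] [Algebra ℝ A]
    [MulSemiringAction G A] [SMulCommClass G ℝ A] : Subalgebra ℝ A where
  carrier := {a | ∀ g : G, g • a = a}
  mul_mem' := fun {a b} ha hb g => by rw [smul_mul', ha g, hb g]
  add_mem' := fun {a b} ha hb g => by rw [smul_add, ha g, hb g]
  algebraMap_mem' := fun r g => by
    rw [Algebra.algebraMap_eq_smul_one, smul_comm, smul_one]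


section MgAux
variable {G A : Type*} [Group G] [CommRing A] [MulSemiringAction G A]

/-- The image `g • m` of an ideal under the action of `g`. -/
def smulIdeal (g : G) (m : Ideal A) : Ideal A :=
  Ideal.map (MulSemiringAction.toRingEquiv G A g : A →+* A) m

theorem smulIdeal_pow (g : G) (m : Ideal A) (k : ℕ) :
    smulIdeal g (m ^ k) = smulIdeal g m ^ k := Ideal.map_pow _ _ _

theorem mem_smulIdeal {g : G} {m : Ideal A} {a : A} :
    a ∈ smulIdeal g m ↔ g⁻¹ • a ∈ m := by
  rw [smulIdeal, Ideal.map_comap_of_equiv, Ideal.mem_comap]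
  exact Iff.rfl

theorem mem_smulIdeal_of_smul_mem {g : G} {m : Ideal A} {a : A} (h : g⁻¹ • a ∈ m) :
    a ∈ smulIdeal g m := mem_smulIdeal.2 h

theorem smulIdeal_one (m : Ideal A) : smulIdeal (1 : G) m = m := by
  ext a; rw [mem_smulIdeal, inv_one, one_smul]

theorem smulIdeal_coe (g : G) (m : Ideal A) :
    (smulIdeal g m : Set A) = (fun a => g • a) '' (m : Set A) := by
  ext a
  simp only [SetLike.mem_coe, mem_smulIdeal, Set.mem_image]
  constructor
  · intro h; exact ⟨g⁻¹ • a, h, smul_inv_smul g a⟩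
  · rintro ⟨b, hb, rfl⟩; rwa [inv_smul_smul]

theorem smulIdeal_isMaximal (g : G) (m : Ideal A) [m.IsMaximal] :
    (smulIdeal g m).IsMaximal := by
  rw [smulIdeal, Ideal.map_comap_of_equiv]
  exact Ideal.comap_isMaximal_of_surjective _ (EquivLike.surjective _)

theorem smulIdeal_mul (g h : G) (m : Ideal A) :
    smulIdeal (g * h) m = smulIdeal g (smulIdeal h m) := by
  rw [smulIdeal, smulIdeal, smulIdeal, Ideal.map_map]
  congr 1
  ext a
  exact mul_smul g h a

end MgAux
section Aux2
variable {G A : Type*} [Group G] [CommRing A] [MulSemiringAction G A]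
variable {m : Ideal A} [hm : m.IsMaximal]

theorem smulIdeal_ne (hfree : ∀ g : G, g ≠ 1 → (fun a => g • a) '' (m : Set A) ≠ (m : Set A))
    {g : G} (hg : g ≠ 1) : smulIdeal g m ≠ m := by
  intro h
  exact hfree g hg (by rw [← smulIdeal_coe, h])

theorem smulIdeal_injective
    (hfree : ∀ g : G, g ≠ 1 → (fun a => g • a) '' (m : Set A) ≠ (m : Set A)) :
    Function.Injective (fun g : G => smulIdeal g m) := by
  intro g h hgh
  simp only at hgh
  by_contra hne
  have h1 : h⁻¹ * g ≠ 1 := by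
    intro h1
    rw [inv_mul_eq_one] at h1
    exact hne h1.symm
  refine smulIdeal_ne hfree h1 ?_
  rw [smulIdeal_mul, hgh, ← smulIdeal_mul, inv_mul_cancel, smulIdeal_one]

theorem smulIdeal_coprime
    (hfree : ∀ g : G, g ≠ 1 → (fun a => g • a) '' (m : Set A) ≠ (m : Set A))
    {g h : G} (hgh : g ≠ h) : IsCoprime (smulIdeal g m) (smulIdeal h m) := by
  have := smulIdeal_isMaximal (A := A) (g := g) (m := m)
  exact Ideal.isCoprime_iff_sup_eq.mpr
    (Ideal.IsMaximal.coprime_of_ne (smulIdeal_isMaximal g m) (smulIdeal_isMaximal h m)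
      (fun e => hgh (smulIdeal_injective hfree e)))

/-- CRT: an element `e ≡ 1 mod m²` lying in `(g•m)²` for all `g ≠ 1`. -/
theorem exists_crt_elt [Fintype G]
    (hfree : ∀ g : G, g ≠ 1 → (fun a => g • a) '' (m : Set A) ≠ (m : Set A)) :
    ∃ e : A, e - 1 ∈ m ^ 2 ∧ ∀ g : G, g ≠ 1 → e ∈ smulIdeal g m ^ 2 := by
  classical
  set J : Ideal A := ∏ g ∈ Finset.univ.erase (1 : G), smulIdeal g m ^ 2 with hJ
  have hco : IsCoprime (m ^ 2) J := by
    refine IsCoprime.prod_right fun g hg => ?_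
    have hg1 : g ≠ 1 := (Finset.mem_erase.1 hg).1
    have : IsCoprime m (smulIdeal g m) := by
      have := smulIdeal_coprime hfree (Ne.symm hg1)
      rwa [smulIdeal_one (G := G) m] at this
    exact this.pow
  have hsup : m ^ 2 ⊔ J = ⊤ := (Ideal.isCoprime_iff_sup_eq.1 hco)
  have h1 : (1 : A) ∈ m ^ 2 ⊔ J := hsup ▸ Submodule.mem_top
  obtain ⟨x, hx, y, hy, hxy⟩ := Submodule.mem_sup.1 h1
  refine ⟨y, ?_, fun g hg => ?_⟩
  · have : y - 1 = -x := by rw [← hxy]; ring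
    rw [this]
    exact neg_mem hx
  · have : J ≤ smulIdeal g m ^ 2 := by
      refine le_trans Ideal.prod_le_inf ?_
      exact Finset.inf_le (Finset.mem_erase.2 ⟨hg, Finset.mem_univ g⟩)
    exact this hy

end Aux2
section Integ
variable {G A : Type*} [Group G] [CommRing A] [Algebra ℝ A]
    [MulSemiringAction G A] [SMulCommClass G ℝ A]

theorem fixed_isIntegral [Fintype G] : Algebra.IsIntegral (fixedSubalgebra G A) A := by
  constructor
  intro a
  classical
  let q : Polynomial A := ∏ g : G, (Polynomial.X - Polynomial.C (g • a))
  have hsmul : ∀ h : G, h • q = q := by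
    intro h
    show h • ∏ g : G, (Polynomial.X - Polynomial.C (g • a)) = _
    rw [Finset.smul_prod']
    apply Fintype.prod_bijective (fun g => h * g) (Group.mulLeft_bijective h)
    intro g
    rw [smul_sub, Polynomial.smul_X, Polynomial.smul_C, smul_smul]
  have hcoeff : (↑q.coeffs : Set A) ⊆ (fixedSubalgebra G A).toSubring := by
    intro c hc
    simp only [Polynomial.coeffs, Finset.coe_image, Set.mem_image] at hc
    obtain ⟨n, -, rfl⟩ := hc
    intro h
    rw [← Polynomial.coeff_smul, hsmul]
  have hmap : (q.toSubring _ hcoeff).map (algebraMap (fixedSubalgebra G A) A) = q := by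
    ext n
    rw [Polynomial.coeff_map]
    exact Polynomial.coeff_toSubring q _ hcoeff
  refine ⟨q.toSubring _ hcoeff, (Polynomial.monic_toSubring _ _ _).2 ?_, ?_⟩
  · exact Polynomial.monic_prod_of_monic _ _ fun _ _ => Polynomial.monic_X_sub_C _
  · rw [Polynomial.eval₂_eq_eval_map, hmap]
    show Polynomial.eval a (∏ g : G, (Polynomial.X - Polynomial.C (g • a) : Polynomial A)) = 0
    rw [Polynomial.eval_prod]
    exact Finset.prod_eq_zero (Finset.mem_univ (1 : G)) (by simp)
end Integ
section Aux3
variable {G A : Type*} [Group G] [CommRing A] [Algebra ℝ A]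
    [MulSemiringAction G A] [SMulCommClass G ℝ A]
variable {m : Ideal A}

/-- The averaged element `∑ g • (e x)` lies in the fixed algebra, in `m`, and is `x mod m²`. -/
theorem exists_sigma [Fintype G] {e : A} (he1 : e - 1 ∈ m ^ 2)
    (he : ∀ g : G, g ≠ 1 → e ∈ smulIdeal g m ^ 2) {x : A} (hx : x ∈ m) :
    ∃ c : (fixedSubalgebra G A), (c : A) ∈ m ∧ (c : A) - x ∈ m ^ 2 := by
  classical
  have hfix : ∀ h : G, h • (∑ g : G, g • (e * x)) = ∑ g : G, g • (e * x) := by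
    intro h
    rw [Finset.smul_sum]
    exact Fintype.sum_bijective (fun g => h * g) (Group.mulLeft_bijective h) _ _
      (fun g => (mul_smul h g (e * x)).symm)
  have hsplit : ∑ g : G, g • (e * x)
      = (1 : G) • (e * x) + ∑ g ∈ Finset.univ.erase (1 : G), g • (e * x) :=
    (Finset.add_sum_erase _ _ (Finset.mem_univ (1 : G))).symm
  have hsum2 : ∑ g ∈ Finset.univ.erase (1 : G), g • (e * x) ∈ m ^ 2 := by
    refine Ideal.sum_mem _ fun g hg => ?_
    have hg1 : g ≠ 1 := (Finset.mem_erase.1 hg).1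
    have hge : g • e ∈ m ^ 2 := by
      have := he g⁻¹ (by simpa using hg1)
      rw [← smulIdeal_pow, mem_smulIdeal, inv_inv] at this
      exact this
    rw [smul_mul']
    exact Ideal.mul_mem_right _ _ hge
  have hdiff : (∑ g : G, g • (e * x)) - x ∈ m ^ 2 := by
    rw [hsplit, one_smul]
    have : e * x + (∑ g ∈ Finset.univ.erase (1 : G), g • (e * x)) - x
        = (e - 1) * x + ∑ g ∈ Finset.univ.erase (1 : G), g • (e * x) := by ring
    rw [this]
    exact Ideal.add_mem _ (Ideal.mul_mem_right _ _ he1) hsum2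
  have hmem : (∑ g : G, g • (e * x)) ∈ m := by
    have := Ideal.add_mem m ((Ideal.pow_le_self two_ne_zero) hdiff) hx
    simpa using this
  exact ⟨⟨∑ g : G, g • (e * x), hfix⟩, hmem, hdiff⟩

theorem coe_mem_pow {k : ℕ} (c : (fixedSubalgebra G A))
    (hc : c ∈ (Ideal.comap (fixedSubalgebra G A).val m) ^ k) : (c : A) ∈ m ^ k := by
  have hle : Ideal.map (fixedSubalgebra G A).val
      ((Ideal.comap (fixedSubalgebra G A).val m) ^ k) ≤ m ^ k := by
    rw [Ideal.map_pow]
    exact Ideal.pow_right_mono Ideal.map_comap_le k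
  exact hle (Ideal.mem_map_of_mem _ hc)

theorem dk [Fintype G] {e : A} (he1 : e - 1 ∈ m ^ 2)
    (he : ∀ g : G, g ≠ 1 → e ∈ smulIdeal g m ^ 2) :
    ∀ k, 1 ≤ k → ∀ a ∈ m ^ k, ∃ c : (fixedSubalgebra G A),
      c ∈ (Ideal.comap (fixedSubalgebra G A).val m) ^ k ∧ a - (c : A) ∈ m ^ (k + 1) := by
  intro k hk
  induction k, hk using Nat.le_induction with
  | base =>
    intro a ha
    rw [pow_one] at ha
    obtain ⟨c, hcm, hcd⟩ := exists_sigma he1 he ha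
    refine ⟨c, by rwa [pow_one, Ideal.mem_comap], ?_⟩
    have := neg_mem hcd
    rwa [neg_sub] at this
  | succ k hk ih =>
    intro a ha
    rw [pow_succ] at ha
    refine Submodule.mul_induction_on ha ?_ ?_
    · intro x hx y hy
      obtain ⟨cx, hcx, hdx⟩ := ih x hx
      obtain ⟨cy, hcym, hcyd⟩ := exists_sigma he1 he hy
      have hcy : cy ∈ Ideal.comap (fixedSubalgebra G A).val m := Ideal.mem_comap.2 hcym
      refine ⟨cx * cy, by rw [pow_succ]; exact Ideal.mul_mem_mul hcx hcy, ?_⟩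
      have key : x * y - ((cx * cy : (fixedSubalgebra G A)) : A)
          = (x - (cx : A)) * y + (cx : A) * (y - (cy : A)) := by
        push_cast; ring
      rw [key]
      refine Ideal.add_mem _ ?_ ?_
      · have := Ideal.mul_mem_mul hdx hy
        rwa [← pow_succ] at this
      · have h1 : (cx : A) ∈ m ^ k := coe_mem_pow cx hcx
        have h2 : y - (cy : A) ∈ m ^ 2 := by
          have := neg_mem hcyd; rwa [neg_sub] at this
        have := Ideal.mul_mem_mul h1 h2
        rwa [← pow_add] at this
    · rintro x y ⟨c1, hc1, hd1⟩ ⟨c2, hc2, hd2⟩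
      refine ⟨c1 + c2, Ideal.add_mem _ hc1 hc2, ?_⟩
      have : x + y - ((c1 + c2 : (fixedSubalgebra G A)) : A)
          = (x - (c1 : A)) + (y - (c2 : A)) := by push_cast; ring
      rw [this]
      exact Ideal.add_mem _ hd1 hd2

end Aux3
section Reynolds
variable {G A : Type*} [Group G] [CommRing A] [Algebra ℝ A]
    [MulSemiringAction G A] [SMulCommClass G ℝ A]

theorem reynolds [Fintype G] (I : Ideal (fixedSubalgebra G A))
    (b : (fixedSubalgebra G A)) (hb : (b : A) ∈ Ideal.map (algebraMap (fixedSubalgebra G A) A) I) :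
    b ∈ I := by
  classical
  set R : A → A := fun a => (Fintype.card G : ℝ)⁻¹ • ∑ g : G, g • a with hR
  have hRfix : ∀ a : A, ∀ h : G, h • R a = R a := by
    intro a h
    rw [hR]
    simp only
    rw [smul_comm, Finset.smul_sum]
    congr 1
    exact Fintype.sum_bijective (fun g => h * g) (Group.mulLeft_bijective h) _ _
      (fun g => (mul_smul h g a).symm)
  have hRadd : ∀ a b : A, R (a + b) = R a + R b := by
    intro a b
    simp only [hR, smul_add, Finset.sum_add_distrib]
  have hRmul : ∀ (r : (fixedSubalgebra G A)) (a : A), R ((r : A) * a) = (r : A) * R a := by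
    intro r a
    simp only [hR]
    have h1 : ∀ g : G, g • ((r : A) * a) = (r : A) * (g • a) := fun g => by
      rw [smul_mul', r.2 g]
    rw [Finset.sum_congr rfl (fun g _ => h1 g), ← Finset.mul_sum, mul_smul_comm]
  have hRb : R (b : A) = (b : A) := by
    simp only [hR]
    have : ∀ g : G, g • (b : A) = (b : A) := b.2
    rw [Finset.sum_congr rfl (fun g _ => this g), Finset.sum_const, Finset.card_univ,
      ← Nat.cast_smul_eq_nsmul ℝ, smul_smul, inv_mul_cancel₀, one_smul]
    exact Nat.cast_ne_zero.2 Fintype.card_ne_zero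
  have key : ∀ a ∈ Ideal.map (algebraMap (fixedSubalgebra G A) A) I,
      ∃ c ∈ I, R a = (c : A) := by
    intro a ha
    have ha' : a ∈ I • (⊤ : Submodule (fixedSubalgebra G A) A) := by
      rw [Ideal.smul_top_eq_map]; exact ha
    refine Submodule.smul_induction_on ha' ?_ ?_
    · intro r hr n _
      have hfix : ∀ h : G, h • R n = R n := hRfix n
      refine ⟨r * ⟨R n, hfix⟩, Ideal.mul_mem_right _ _ hr, ?_⟩
      rw [Algebra.smul_def]
      have : algebraMap (fixedSubalgebra G A) A r = (r : A) := rfl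
      rw [this, hRmul]
      rfl
    · rintro x y ⟨c1, hc1, hd1⟩ ⟨c2, hc2, hd2⟩
      exact ⟨c1 + c2, Ideal.add_mem _ hc1 hc2, by rw [hRadd, hd1, hd2]; rfl⟩
  obtain ⟨c, hc, hRc⟩ := key _ hb
  have : (b : A) = (c : A) := by rw [← hRb, hRc]
  rwa [show b = c from Subtype.ext this]

end Reynolds
section Main
variable {G A : Type*} [Group G] [CommRing A] [Algebra ℝ A]
    [MulSemiringAction G A] [SMulCommClass G ℝ A]
variable {m : Ideal A} [hm : m.IsMaximal]

theorem fixed_mem_smulIdeal_pow (b : (fixedSubalgebra G A)) {k : ℕ} (hb : (b : A) ∈ m ^ k)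
    (g : G) : (b : A) ∈ smulIdeal g m ^ k := by
  rw [← smulIdeal_pow, smulIdeal]
  have := Ideal.mem_map_of_mem (MulSemiringAction.toRingEquiv G A g : A →+* A) hb
  rwa [show (MulSemiringAction.toRingEquiv G A g : A →+* A) (b : A) = (b : A) from b.2 g] at this

theorem mem_prod_of_forall [Fintype G]
    (hfree : ∀ g : G, g ≠ 1 → (fun a => g • a) '' (m : Set A) ≠ (m : Set A))
    {k : ℕ} {x : A} (s : Finset G) (hx : ∀ g ∈ s, x ∈ smulIdeal g m ^ k) :
    x ∈ ∏ g ∈ s, smulIdeal g m ^ k := by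
  classical
  induction s using Finset.induction_on with
  | empty => simp [Ideal.one_eq_top]
  | @insert a s ha ih =>
    have hco : IsCoprime (smulIdeal a m ^ k) (∏ g ∈ s, smulIdeal g m ^ k) := by
      refine IsCoprime.prod_right fun g hg => ?_
      exact (smulIdeal_coprime hfree (fun h => ha (by rw [h]; exact hg))).pow
    have hinf : x ∈ smulIdeal a m ^ k ⊓ ∏ g ∈ s, smulIdeal g m ^ k :=
      ⟨hx a (Finset.mem_insert_self a s), ih fun g hg => hx g (Finset.mem_insert_of_mem hg)⟩
    rw [Finset.prod_insert ha, ← Ideal.inf_eq_mul_of_isCoprime hco]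
    exact hinf

/-- The key algebraic fact: a fixed element of `m²` lies in `p²`. -/
theorem fixed_mem_sq [Fintype G] (hNoeth : IsNoetherianRing A)
    (hfree : ∀ g : G, g ≠ 1 → (fun a => g • a) '' (m : Set A) ≠ (m : Set A))
    (b : (fixedSubalgebra G A)) (hb : (b : A) ∈ m ^ 2) :
    b ∈ (Ideal.comap (fixedSubalgebra G A).val m) ^ 2 := by
  classical
  haveI : Algebra.IsIntegral (fixedSubalgebra G A) A := fixed_isIntegral
  set p : Ideal (fixedSubalgebra G A) := Ideal.comap (fixedSubalgebra G A).val m with hp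
  have hcomap_eq : Ideal.comap (algebraMap (fixedSubalgebra G A) A) m = p := rfl
  have hpmax : p.IsMaximal := by
    rw [← hcomap_eq]
    exact Ideal.isMaximal_comap_of_isIntegral_of_isMaximal m
  -- the product of all conjugates of `m`
  have hJrad : (∏ g : G, smulIdeal g m)
      ≤ (Ideal.map (algebraMap (fixedSubalgebra G A) A) (p ^ 2)).radical := by
    rw [Ideal.radical_eq_sInf]
    refine le_sInf ?_
    rintro q ⟨hq1, hq2⟩
    haveI := hq2
    have hmapp : Ideal.map (algebraMap (fixedSubalgebra G A) A) p ≤ q :=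
      hq2.le_of_pow_le (by rw [← Ideal.map_pow]; exact hq1)
    have hple : p ≤ Ideal.comap (algebraMap (fixedSubalgebra G A) A) q :=
      Ideal.map_le_iff_le_comap.1 hmapp
    have hqne : Ideal.comap (algebraMap (fixedSubalgebra G A) A) q ≠ ⊤ :=
      (Ideal.IsPrime.comap _).ne_top
    have hpeq : p = Ideal.comap (algebraMap (fixedSubalgebra G A) A) q :=
      hpmax.eq_of_le hqne hple
    haveI hqmax : q.IsMaximal :=
      Ideal.isMaximal_of_isIntegral_of_isMaximal_comap q (hpeq ▸ hpmax)
    have hcov : (q : Set A) ⊆ ⋃ g ∈ (Finset.univ : Finset G), ((smulIdeal g m : Ideal A) : Set A) := by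
      intro a ha
      have hNfix : ∀ h : G, h • (∏ g : G, g • a) = ∏ g : G, g • a := by
        intro h
        rw [Finset.smul_prod']
        exact Fintype.prod_bijective (fun g => h * g) (Group.mulLeft_bijective h) _ _
          (fun g => (mul_smul h g a).symm)
      have hNq : (∏ g : G, g • a) ∈ q := by
        rw [← Finset.mul_prod_erase _ _ (Finset.mem_univ (1 : G)), one_smul]
        exact Ideal.mul_mem_right _ _ ha
      have hNm : (∏ g : G, g • a) ∈ m := by
        have h1 : (⟨∏ g : G, g • a, hNfix⟩ : (fixedSubalgebra G A))
            ∈ Ideal.comap (algebraMap (fixedSubalgebra G A) A) q := Ideal.mem_comap.2 hNq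
        rw [← hpeq, hp] at h1
        exact Ideal.mem_comap.1 h1
      obtain ⟨g, -, hg⟩ := (Ideal.IsPrime.prod_mem_iff).1 hNm
      refine Set.mem_biUnion (Finset.mem_coe.2 (Finset.mem_univ g⁻¹)) ?_
      exact mem_smulIdeal_of_smul_mem (by rwa [inv_inv])
    obtain ⟨g₀, -, hle⟩ := (Ideal.subset_union_prime 1 1
      (fun g _ _ _ => (smulIdeal_isMaximal g m).isPrime)).1 hcov
    have hqeq : q = smulIdeal g₀ m := hqmax.eq_of_le (smulIdeal_isMaximal g₀ m).ne_top hle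
    rw [hqeq]
    exact le_trans Ideal.prod_le_inf (Finset.inf_le (Finset.mem_univ g₀))
  obtain ⟨K, hK⟩ := Ideal.exists_pow_le_of_le_radical_of_fg hJrad (IsNoetherian.noetherian _)
  -- termination: high powers of `m` meet the fixed algebra inside `p²`
  have hterm : ∀ k, K ≤ k → ∀ b : (fixedSubalgebra G A), (b : A) ∈ m ^ k → b ∈ p ^ 2 := by
    intro k hk b hbk
    have h1 : (b : A) ∈ ∏ g : G, smulIdeal g m ^ k :=
      mem_prod_of_forall hfree Finset.univ fun g _ => fixed_mem_smulIdeal_pow b hbk g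
    rw [Finset.prod_pow] at h1
    have h2 : (b : A) ∈ Ideal.map (algebraMap (fixedSubalgebra G A) A) (p ^ 2) :=
      hK (Ideal.pow_le_pow_right hk h1)
    exact reynolds _ b h2
  obtain ⟨e, he1, he⟩ := exists_crt_elt hfree
  -- downward recursion
  have hrec : ∀ d k, 2 ≤ k → K ≤ k + d → ∀ b : (fixedSubalgebra G A),
      (b : A) ∈ m ^ k → b ∈ p ^ 2 := by
    intro d
    induction d with
    | zero => intro k hk2 hkK b hbk; exact hterm k (by omega) b hbk
    | succ d ih =>
      intro k hk2 hkK b hbk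
      by_cases hc : K ≤ k
      · exact hterm k hc b hbk
      · obtain ⟨c, hcp, hcd⟩ := dk he1 he k (by omega) (b : A) hbk
        have hc2 : c ∈ p ^ 2 := Ideal.pow_le_pow_right hk2 hcp
        have hbc : ((b - c : (fixedSubalgebra G A)) : A) ∈ m ^ (k + 1) := hcd
        have := ih (k + 1) (by omega) (by omega) (b - c) hbc
        have hfin := Ideal.add_mem _ this hc2
        rwa [sub_add_cancel] at hfin
  exact hrec K 2 le_rfl (by omega) b hb

end Main
/-- Let `A` be a finitely generated commutative `ℝ`-algebra with an action of a finite
group `G` by `ℝ`-algebra automorphisms, `B = A^G`, and `m` a maximal ideal of `A` with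
residue field `ℝ` and trivial stabilizer; let `p = m ∩ B`. Then the inclusion `B ⊆ A`
induces an isomorphism of `ℝ`-vector spaces `p/p² → m/m²` of Zariski cotangent spaces. -/
theorem stmt14 {G A : Type*} [Group G] [Finite G] [CommRing A] [Algebra ℝ A]
    [MulSemiringAction G A] [SMulCommClass G ℝ A]
    (hfg : Algebra.FiniteType ℝ A)
    (m : Ideal A) [hm : m.IsMaximal]
    (hres : Function.Bijective (fun r : ℝ => Ideal.Quotient.mk m (algebraMap ℝ A r)))
    (hfree : ∀ g : G, g ≠ 1 → (fun a => g • a) '' (m : Set A) ≠ (m : Set A)) :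
    Function.Bijective
      ⇑(Ideal.mapCotangent (Ideal.comap (fixedSubalgebra G A).val m) m
        (fixedSubalgebra G A).val le_rfl) := by
  classical
  cases nonempty_fintype G
  haveI : IsNoetherianRing A := by
    haveI := hfg
    exact Algebra.FiniteType.isNoetherianRing ℝ A
  obtain ⟨e, he1, he⟩ := exists_crt_elt hfree
  constructor
  · rw [← LinearMap.ker_eq_bot, LinearMap.ker_eq_bot']
    intro x hx
    obtain ⟨y, rfl⟩ := Ideal.toCotangent_surjective _ x
    rw [Ideal.mapCotangent_toCotangent, Ideal.toCotangent_eq_zero] at hx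
    have h2 := fixed_mem_sq ‹IsNoetherianRing A› hfree y.1 hx
    rw [Ideal.toCotangent_eq_zero]
    exact h2
  · intro z
    obtain ⟨a, rfl⟩ := Ideal.toCotangent_surjective m z
    obtain ⟨c, hcm, hcd⟩ := exists_sigma he1 he a.2
    refine ⟨Ideal.toCotangent _ ⟨c, Ideal.mem_comap.2 hcm⟩, ?_⟩
    rw [Ideal.mapCotangent_toCotangent]
    exact (Ideal.toCotangent_eq m).mpr (by simpa using hcd)
end
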